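/- Let (K, |·|) be a valued field (archimedean or not), ω a non-principal ultrafilter on ℕ, and (λ_k) a sequence of reals in [1, ∞) tending to ∞. Define K_ω as the set of sequences (a_k) in K with |a_k|^{1/λ_k} bounded, modulo the relation lim_ω |a_k − b_k|^{1/λ_k} = 0, with componentwise operations. Then K_ω is a field, and |[a_k]|_ω := lim_ω |a_k|^{1/λ_k} is a well-defined ultrametric absolute value on K_ω which is trivial on the image of K embedded via constant sequences. -/

import Mathlib

open Filter

universe u
namespace Stmt9
variable {K : Type u} [Field K] (abv : AbsoluteValue K ℝ) (lam : ℕ → ℝ)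

/-- `phi9 a k = |a k| ^ (1/λ k)`. -/
noncomputable def phi9 (a : ℕ → K) (k : ℕ) : ℝ := abv (a k) ^ (1 / lam k)

variable (hlam1 : ∀ k, 1 ≤ lam k)

lemma phi9_nonneg (a : ℕ → K) (k : ℕ) : 0 ≤ phi9 abv lam a k :=
  Real.rpow_nonneg (abv.nonneg _) _

include hlam1

lemma lam_pos9 (k : ℕ) : 0 < lam k := lt_of_lt_of_le one_pos (hlam1 k)

lemma exp_pos9 (k : ℕ) : 0 < 1 / lam k := one_div_pos.mpr (lam_pos9 lam hlam1 k)

lemma exp_le_one9 (k : ℕ) : 1 / lam k ≤ 1 := by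
  rw [div_le_one (lam_pos9 lam hlam1 k)]; exact hlam1 k

lemma phi9_zero (k : ℕ) : phi9 abv lam (fun _ => (0 : K)) k = 0 := by
  show (abv 0) ^ (1 / lam k) = 0
  rw [map_zero]
  exact Real.zero_rpow (ne_of_gt (exp_pos9 lam hlam1 k))

omit hlam1

lemma phi9_one (k : ℕ) : phi9 abv lam (fun _ => (1 : K)) k = 1 := by
  simp [phi9]

lemma phi9_mul (a b : ℕ → K) (k : ℕ) :
    phi9 abv lam (fun n => a n * b n) k = phi9 abv lam a k * phi9 abv lam b k := by
  simp only [phi9, map_mul]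
  exact Real.mul_rpow (abv.nonneg _) (abv.nonneg _)

lemma phi9_neg (a : ℕ → K) (k : ℕ) : phi9 abv lam (fun n => - a n) k = phi9 abv lam a k := by
  simp [phi9]

lemma rpow_max9 (x y t : ℝ) (hx : 0 ≤ x) (hy : 0 ≤ y) (ht : 0 ≤ t) :
    max x y ^ t = max (x ^ t) (y ^ t) := by
  rcases le_total x y with h | h
  · rw [max_eq_right h, max_eq_right (Real.rpow_le_rpow hx h ht)]
  · rw [max_eq_left h, max_eq_left (Real.rpow_le_rpow hy h ht)]

include hlam1

lemma phi9_add_le (a b : ℕ → K) (k : ℕ) :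
    phi9 abv lam (fun n => a n + b n) k
      ≤ 2 ^ (1 / lam k) * max (phi9 abv lam a k) (phi9 abv lam b k) := by
  have h1 : abv (a k + b k) ≤ 2 * max (abv (a k)) (abv (b k)) := by
    calc abv (a k + b k) ≤ abv (a k) + abv (b k) := abv.add_le _ _
      _ ≤ max (abv (a k)) (abv (b k)) + max (abv (a k)) (abv (b k)) := by
          gcongr <;> [exact le_max_left _ _; exact le_max_right _ _]
      _ = 2 * max (abv (a k)) (abv (b k)) := by ring
  have h2 : phi9 abv lam (fun n => a n + b n) k
      ≤ (2 * max (abv (a k)) (abv (b k))) ^ (1 / lam k) :=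
    Real.rpow_le_rpow (abv.nonneg _) h1 (le_of_lt (exp_pos9 lam hlam1 k))
  calc phi9 abv lam (fun n => a n + b n) k
      ≤ (2 * max (abv (a k)) (abv (b k))) ^ (1 / lam k) := h2
    _ = 2 ^ (1 / lam k) * (max (abv (a k)) (abv (b k))) ^ (1 / lam k) :=
        Real.mul_rpow (by norm_num) (le_max_of_le_left (abv.nonneg _))
    _ = 2 ^ (1 / lam k) * max (phi9 abv lam a k) (phi9 abv lam b k) := by
        rw [rpow_max9 _ _ _ (abv.nonneg _) (abv.nonneg _) (le_of_lt (exp_pos9 lam hlam1 k))]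
        rfl

lemma two_rpow_le9 (k : ℕ) : (2 : ℝ) ^ (1 / lam k) ≤ 2 := by
  calc (2:ℝ) ^ (1 / lam k) ≤ 2 ^ (1:ℝ) :=
        Real.rpow_le_rpow_of_exponent_le one_le_two (exp_le_one9 lam hlam1 k)
    _ = 2 := Real.rpow_one 2

/-- The subring of bounded sequences. -/
noncomputable def R9 : Subring (ℕ → K) where
  carrier := {a | ∃ M, ∀ k, phi9 abv lam a k ≤ M}
  zero_mem' := ⟨0, fun k => le_of_eq (phi9_zero abv lam hlam1 k)⟩
  one_mem' := ⟨1, fun k => le_of_eq (phi9_one abv lam k)⟩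
  add_mem' := by
    rintro a b ⟨Ma, hMa⟩ ⟨Mb, hMb⟩
    refine ⟨2 * max Ma Mb, fun k => ?_⟩
    have h0 : (0:ℝ) ≤ max (phi9 abv lam a k) (phi9 abv lam b k) :=
      le_max_of_le_left (phi9_nonneg abv lam a k)
    calc phi9 abv lam (a + b) k
        ≤ 2 ^ (1 / lam k) * max (phi9 abv lam a k) (phi9 abv lam b k) :=
          phi9_add_le abv lam hlam1 a b k
      _ ≤ 2 * max Ma Mb := by
          apply mul_le_mul (two_rpow_le9 lam hlam1 k) _ h0 (by norm_num)
          exact max_le_max (hMa k) (hMb k)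
  mul_mem' := by
    rintro a b ⟨Ma, hMa⟩ ⟨Mb, hMb⟩
    refine ⟨Ma * Mb, fun k => ?_⟩
    have := phi9_mul abv lam a b k
    calc phi9 abv lam (a * b) k = phi9 abv lam a k * phi9 abv lam b k := this
      _ ≤ Ma * Mb := mul_le_mul (hMa k) (hMb k) (phi9_nonneg abv lam b k)
          (le_trans (phi9_nonneg abv lam a k) (hMa k))
  neg_mem' := by
    rintro a ⟨Ma, hMa⟩
    exact ⟨Ma, fun k => (phi9_neg abv lam a k).le.trans (hMa k)⟩

/-- The ideal of null sequences. -/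
noncomputable def I9 (ω : Ultrafilter ℕ) : Ideal (R9 abv lam hlam1) where
  carrier := {a | Tendsto (phi9 abv lam (a : ℕ → K)) (ω : Filter ℕ) (nhds 0)}
  zero_mem' := by
    have : phi9 abv lam ((0 : R9 abv lam hlam1) : ℕ → K) = fun _ => 0 :=
      funext fun k => phi9_zero abv lam hlam1 k
    simp only [Set.mem_setOf_eq, this]
    exact tendsto_const_nhds
  add_mem' := by
    rintro a b (ha : Tendsto _ _ _) (hb : Tendsto _ _ _)
    show Tendsto _ _ _
    have key : ∀ k, phi9 abv lam ((a + b : R9 abv lam hlam1) : ℕ → K) k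
        ≤ 2 ^ (1 / lam k) * max (phi9 abv lam (a : ℕ → K) k) (phi9 abv lam (b : ℕ → K) k) :=
      fun k => phi9_add_le abv lam hlam1 _ _ k
    have hrhs : Tendsto (fun k => (2:ℝ) ^ (1 / lam k)
        * max (phi9 abv lam (a : ℕ → K) k) (phi9 abv lam (b : ℕ → K) k)) (ω : Filter ℕ)
        (nhds 0) := by
      have hbd : ∀ k, (2:ℝ) ^ (1 / lam k) ≤ 2 := two_rpow_le9 lam hlam1
      have hmax : Tendsto (fun k => max (phi9 abv lam (a : ℕ → K) k)
          (phi9 abv lam (b : ℕ → K) k)) (ω : Filter ℕ) (nhds 0) := by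
        have := ha.max hb; simpa using this
      apply squeeze_zero (fun k => mul_nonneg (Real.rpow_nonneg (by norm_num) _)
        (le_max_of_le_left (phi9_nonneg abv lam _ k))) (fun k => ?_) (by simpa using hmax.const_mul 2)
      exact mul_le_mul_of_nonneg_right (hbd k) (le_max_of_le_left (phi9_nonneg abv lam _ k))
    exact squeeze_zero (fun k => phi9_nonneg abv lam _ k) key hrhs
  smul_mem' := by
    rintro c a (ha : Tendsto _ _ _)
    show Tendsto (phi9 abv lam (fun n => (c : ℕ → K) n * (a : ℕ → K) n)) (ω : Filter ℕ) (nhds 0)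
    obtain ⟨Mc, hMc⟩ := c.2
    have key : ∀ k, phi9 abv lam (fun n => (c : ℕ → K) n * (a : ℕ → K) n) k
        ≤ Mc * phi9 abv lam (a : ℕ → K) k := fun k => by
      rw [phi9_mul abv lam _ _ k]
      exact mul_le_mul_of_nonneg_right (hMc k) (phi9_nonneg abv lam _ k)
    exact squeeze_zero (fun k => phi9_nonneg abv lam _ k) key (by simpa using ha.const_mul Mc)

omit hlam1

lemma exists_lim9 (ω : Ultrafilter ℕ) (f : ℕ → ℝ) (h0 : ∀ k, 0 ≤ f k)
    (hM : ∃ M, ∀ k, f k ≤ M) : ∃ l, 0 ≤ l ∧ Tendsto f (ω : Filter ℕ) (nhds l) := by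
  obtain ⟨M, hM⟩ := hM
  obtain ⟨l, hl, hle⟩ := (isCompact_Icc (a := (0:ℝ)) (b := M)).ultrafilter_le_nhds
    (Ultrafilter.map f ω)
    (by rw [le_principal_iff, Ultrafilter.coe_map, Filter.mem_map]
        exact univ_mem' fun k => ⟨h0 k, hM k⟩)
  refine ⟨l, hl.1, ?_⟩
  rwa [Ultrafilter.coe_map] at hle

lemma rpow_tendsto_one9 {c : ℝ} (hc : 0 < c) {l : Filter ℕ} {f : ℕ → ℝ}
    (hf : Tendsto f l (nhds 0)) : Tendsto (fun k => c ^ f k) l (nhds 1) := by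
  have h : (fun k => c ^ f k) = fun k => Real.exp (Real.log c * f k) :=
    funext fun k => Real.rpow_def_of_pos hc _
  rw [h]
  have h2 : Tendsto (fun k => Real.log c * f k) l (nhds 0) := by
    simpa using hf.const_mul (Real.log c)
  have := (Real.continuous_exp.tendsto 0).comp h2
  simpa [Function.comp_def] using this

lemma inv_lam_tendsto9 (ω : Ultrafilter ℕ) (hω : (ω : Filter ℕ) ≤ (Filter.cofinite : Filter ℕ))
    (hlam : Tendsto lam atTop atTop) :
    Tendsto (fun k => 1 / lam k) (ω : Filter ℕ) (nhds 0) := by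
  have h : Tendsto lam (ω : Filter ℕ) atTop :=
    hlam.mono_left (by rwa [Nat.cofinite_eq_atTop] at hω)
  rw [show (fun k => 1 / lam k) = lam⁻¹ from funext fun k => one_div _]
  exact h.inv_tendsto_atTop

include hlam1

lemma two_rpow_tendsto9 (ω : Ultrafilter ℕ) (hω : (ω : Filter ℕ) ≤ (Filter.cofinite : Filter ℕ))
    (hlam : Tendsto lam atTop atTop) :
    Tendsto (fun k => (2:ℝ) ^ (1 / lam k)) (ω : Filter ℕ) (nhds 1) :=
  rpow_tendsto_one9 two_pos (inv_lam_tendsto9 lam ω hω hlam)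

lemma tendsto_le9 (ω : Ultrafilter ℕ) (hω : (ω : Filter ℕ) ≤ (Filter.cofinite : Filter ℕ))
    (hlam : Tendsto lam atTop atTop) (a b : ℕ → K) {la lb : ℝ}
    (hc : Tendsto (phi9 abv lam (fun n => a n - b n)) (ω : Filter ℕ) (nhds 0))
    (hA : Tendsto (phi9 abv lam a) (ω : Filter ℕ) (nhds la))
    (hB : Tendsto (phi9 abv lam b) (ω : Filter ℕ) (nhds lb)) (hlb : 0 ≤ lb) : la ≤ lb := by
  have key : ∀ k, phi9 abv lam a k
      ≤ 2 ^ (1 / lam k) * max (phi9 abv lam (fun n => a n - b n) k) (phi9 abv lam b k) := by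
    intro k
    have h := phi9_add_le abv lam hlam1 (fun n => a n - b n) b k
    simpa [sub_add_cancel] using h
  have hrhs : Tendsto (fun k => (2:ℝ) ^ (1 / lam k)
      * max (phi9 abv lam (fun n => a n - b n) k) (phi9 abv lam b k)) (ω : Filter ℕ)
      (nhds (1 * max 0 lb)) := (two_rpow_tendsto9 lam hlam1 ω hω hlam).mul (hc.max hB)
  rw [one_mul, max_eq_right hlb] at hrhs
  exact le_of_tendsto_of_tendsto' hA hrhs key

omit hlam1 in
lemma abv_inv9 (x : K) : abv x⁻¹ = (abv x)⁻¹ := map_inv₀ abv x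

lemma I9_max (ω : Ultrafilter ℕ) (hω : (ω : Filter ℕ) ≤ (Filter.cofinite : Filter ℕ))
    (hlam : Tendsto lam atTop atTop) : (I9 abv lam hlam1 ω).IsMaximal := by
  rw [Ideal.isMaximal_iff]
  constructor
  · intro h1
    have h1' : Tendsto (phi9 abv lam ((1 : R9 abv lam hlam1) : ℕ → K)) (ω : Filter ℕ) (nhds 0) := h1
    have h2 : phi9 abv lam ((1 : R9 abv lam hlam1) : ℕ → K) = fun _ => 1 :=
      funext fun k => phi9_one abv lam k
    rw [h2] at h1'
    exact one_ne_zero (tendsto_nhds_unique tendsto_const_nhds h1')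
  · rintro J a hIJ h1 haJ
    obtain ⟨l, hl0, hlt⟩ := exists_lim9 ω (phi9 abv lam (a : ℕ → K))
      (phi9_nonneg abv lam _) a.2
    have hl : 0 < l := lt_of_le_of_ne hl0 (by rintro rfl; exact h1 hlt)
    set b : ℕ → K := fun k => if l/2 ≤ phi9 abv lam (a : ℕ → K) k then ((a : ℕ → K) k)⁻¹ else 0
      with hbdef
    have hbval : ∀ k, l/2 ≤ phi9 abv lam (a : ℕ → K) k →
        phi9 abv lam b k = (phi9 abv lam (a : ℕ → K) k)⁻¹ := by
      intro k hk
      have hbk : b k = ((a : ℕ → K) k)⁻¹ := if_pos hk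
      show abv (b k) ^ (1 / lam k) = (phi9 abv lam (a : ℕ → K) k)⁻¹
      rw [hbk, abv_inv9 abv, Real.inv_rpow (abv.nonneg _)]
      rfl
    have hbmem : b ∈ R9 abv lam hlam1 := by
      refine ⟨(l/2)⁻¹, fun k => ?_⟩
      by_cases hk : l/2 ≤ phi9 abv lam (a : ℕ → K) k
      · rw [hbval k hk]
        exact inv_anti₀ (half_pos hl) hk
      · have : b k = 0 := if_neg hk
        show abv (b k) ^ (1 / lam k) ≤ _
        rw [this, map_zero, Real.zero_rpow (ne_of_gt (exp_pos9 lam hlam1 k))]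
        positivity
    set B : R9 abv lam hlam1 := ⟨b, hbmem⟩ with hBdef
    have hBa : B * a - 1 ∈ I9 abv lam hlam1 ω := by
      show Tendsto (phi9 abv lam ((B * a - 1 : R9 abv lam hlam1) : ℕ → K)) (ω : Filter ℕ) (nhds 0)
      have hev : (fun _ => (0:ℝ)) =ᶠ[(ω : Filter ℕ)]
          phi9 abv lam ((B * a - 1 : R9 abv lam hlam1) : ℕ → K) := by
        filter_upwards [hlt (Ioi_mem_nhds (half_lt_self hl))] with k hk
        have hk' : l/2 ≤ phi9 abv lam (a : ℕ → K) k := le_of_lt hk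
        have hane : (a : ℕ → K) k ≠ 0 := by
          intro h0
          have hz : phi9 abv lam (a : ℕ → K) k = 0 := by
            show abv ((a : ℕ → K) k) ^ (1 / lam k) = 0
            rw [h0, map_zero, Real.zero_rpow (ne_of_gt (exp_pos9 lam hlam1 k))]
          rw [hz] at hk'
          linarith [half_pos hl]
        have hval : ((B * a - 1 : R9 abv lam hlam1) : ℕ → K) k = 0 := by
          show b k * (a : ℕ → K) k - 1 = 0
          rw [hbdef]
          simp only [if_pos hk']
          rw [inv_mul_cancel₀ hane, sub_self]
        show (0:ℝ) = abv (((B * a - 1 : R9 abv lam hlam1) : ℕ → K) k) ^ (1 / lam k)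
        rw [hval, map_zero, Real.zero_rpow (ne_of_gt (exp_pos9 lam hlam1 k))]
      exact Tendsto.congr' hev tendsto_const_nhds
    have hBaJ : B * a ∈ J := J.mul_mem_left B haJ
    have : (1 : R9 abv lam hlam1) = B * a - (B * a - 1) := by ring
    rw [this]
    exact J.sub_mem hBaJ (hIJ hBa)

omit hlam1 in
lemma phi9_sub_comm (a b : ℕ → K) :
    phi9 abv lam (fun n => a n - b n) = phi9 abv lam (fun n => b n - a n) :=
  funext fun k => by simp [phi9, abv.map_sub]

omit hlam1 in
lemma mem_R9_iff (hlam1 : ∀ k, 1 ≤ lam k) (a : ℕ → K) :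
    a ∈ R9 abv lam hlam1 ↔ ∃ M, ∀ k, abv (a k) ^ (1 / lam k) ≤ M := Iff.rfl

/-- The absolute value on the quotient. -/
noncomputable def v9 (ω : Ultrafilter ℕ)
    (x : (R9 abv lam hlam1) ⧸ (I9 abv lam hlam1 ω)) : ℝ :=
  limUnder (ω : Filter ℕ)
    (phi9 abv lam ((Ideal.Quotient.mk_surjective x).choose : ℕ → K))

lemma tendsto_v9 (ω : Ultrafilter ℕ) (hω : (ω : Filter ℕ) ≤ (Filter.cofinite : Filter ℕ))
    (hlam : Tendsto lam atTop atTop) (a : R9 abv lam hlam1) :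
    Tendsto (phi9 abv lam (a : ℕ → K)) (ω : Filter ℕ)
      (nhds (v9 abv lam hlam1 ω (Ideal.Quotient.mk (I9 abv lam hlam1 ω) a))) := by
  set x := Ideal.Quotient.mk (I9 abv lam hlam1 ω) a with hx
  set r : R9 abv lam hlam1 := (Ideal.Quotient.mk_surjective x).choose with hrdef
  have hspec : Ideal.Quotient.mk (I9 abv lam hlam1 ω) r = x :=
    (Ideal.Quotient.mk_surjective x).choose_spec
  have hdiff : r - a ∈ I9 abv lam hlam1 ω := Ideal.Quotient.eq.mp (hspec.trans hx)
  have hdiff' : Tendsto (phi9 abv lam (fun n => (r : ℕ → K) n - (a : ℕ → K) n))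
      (ω : Filter ℕ) (nhds 0) := hdiff
  obtain ⟨lr, hlr0, hlrt⟩ := exists_lim9 ω (phi9 abv lam (r : ℕ → K)) (phi9_nonneg abv lam _) r.2
  obtain ⟨la, hla0, hlat⟩ := exists_lim9 ω (phi9 abv lam (a : ℕ → K)) (phi9_nonneg abv lam _) a.2
  have hdiff'' : Tendsto (phi9 abv lam (fun n => (a : ℕ → K) n - (r : ℕ → K) n))
      (ω : Filter ℕ) (nhds 0) := by rwa [phi9_sub_comm]
  have h1 : la ≤ lr := tendsto_le9 abv lam hlam1 ω hω hlam _ _ hdiff'' hlat hlrt hlr0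
  have h2 : lr ≤ la := tendsto_le9 abv lam hlam1 ω hω hlam _ _ hdiff' hlrt hlat hla0
  have hv : v9 abv lam hlam1 ω x = lr := hlrt.limUnder_eq
  rw [hv, ← le_antisymm h1 h2]
  exact hlat

end Stmt9

set_option maxHeartbeats 2000000 in
set_option synthInstance.maxHeartbeats 400000 in
open Stmt9 in
/-- The asymptotic cone of a valued field `(K, |·|)` along a non-principal
ultrafilter `ω` and scalars `λ_k → ∞`: the bounded sequences (those with
`|a k| ^ (1/λ k)` bounded), modulo `lim_ω |a k - b k| ^ (1/λ k) = 0`, form a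
field `L` carrying an ultrametric absolute value
`v_ω [a] = lim_ω |a k| ^ (1/λ k)`, which is trivial on the image of `K`
embedded via constant sequences. -/
theorem stmt9 {K : Type u} [Field K] (abv : AbsoluteValue K ℝ)
    (ω : Ultrafilter ℕ) (hω : (ω : Filter ℕ) ≤ (Filter.cofinite : Filter ℕ))
    (lam : ℕ → ℝ) (hlam1 : ∀ k, 1 ≤ lam k) (hlam : Tendsto lam atTop atTop) :
    ∃ (L : Type u) (_ : Field L) (π : (ℕ → K) → L) (vω : L → ℝ),
      (∀ x : L, ∃ a : ℕ → K, (∃ M : ℝ, ∀ k, abv (a k) ^ (1 / lam k) ≤ M) ∧ π a = x) ∧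
      (∀ a b : ℕ → K, (∃ M : ℝ, ∀ k, abv (a k) ^ (1 / lam k) ≤ M) →
        (∃ M : ℝ, ∀ k, abv (b k) ^ (1 / lam k) ≤ M) →
        (π a = π b ↔
          Tendsto (fun k => abv (a k - b k) ^ (1 / lam k)) (ω : Filter ℕ) (nhds 0))) ∧
      (∀ a b : ℕ → K, (∃ M : ℝ, ∀ k, abv (a k) ^ (1 / lam k) ≤ M) →
        (∃ M : ℝ, ∀ k, abv (b k) ^ (1 / lam k) ≤ M) →
        π (fun k => a k + b k) = π a + π b ∧ π (fun k => a k * b k) = π a * π b) ∧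
      π (fun _ => 0) = 0 ∧ π (fun _ => 1) = 1 ∧
      (∀ a : ℕ → K, (∃ M : ℝ, ∀ k, abv (a k) ^ (1 / lam k) ≤ M) →
        Tendsto (fun k => abv (a k) ^ (1 / lam k)) (ω : Filter ℕ) (nhds (vω (π a)))) ∧
      (∀ x : L, 0 ≤ vω x) ∧
      (∀ x : L, vω x = 0 ↔ x = 0) ∧
      (∀ x y : L, vω (x * y) = vω x * vω y) ∧
      (∀ x y : L, vω (x + y) ≤ max (vω x) (vω y)) ∧
      (∀ c : K, c ≠ 0 → vω (π (fun _ => c)) = 1) := by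
  classical
  haveI hmax : (I9 abv lam hlam1 ω).IsMaximal := I9_max abv lam hlam1 ω hω hlam
  set R := R9 abv lam hlam1 with hR
  set I := I9 abv lam hlam1 ω with hI
  set L := R ⧸ I with hL
  set pr : (ℕ → K) → L :=
    fun a => if h : a ∈ R then Ideal.Quotient.mk I ⟨a, h⟩ else 0 with hpr
  have pi_mk : ∀ (a : ℕ → K) (h : a ∈ R), pr a = Ideal.Quotient.mk I ⟨a, h⟩ :=
    fun a h => dif_pos h
  refine ⟨L, Ideal.Quotient.field I, pr, v9 abv lam hlam1 ω, ?_, ?_, ?_, ?_, ?_, ?_, ?_, ?_, ?_, ?_, ?_⟩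
  · -- surjectivity
    intro x
    obtain ⟨r, hr⟩ := Ideal.Quotient.mk_surjective x
    refine ⟨(r : ℕ → K), (mem_R9_iff abv lam hlam1 _).mp r.2, ?_⟩
    rw [pi_mk _ r.2]
    rwa [show (⟨(r : ℕ → K), r.2⟩ : R) = r from Subtype.ext rfl]
  · -- equality iff
    intro a b ha hb
    have ha' : a ∈ R := ha
    have hb' : b ∈ R := hb
    rw [pi_mk a ha', pi_mk b hb', Ideal.Quotient.eq]
    exact Iff.rfl
  · -- ring hom
    intro a b ha hb
    have ha' : a ∈ R := ha
    have hb' : b ∈ R := hb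
    have hs : (fun k => a k + b k) ∈ R := ((⟨a, ha'⟩ : R) + ⟨b, hb'⟩).2
    have hm : (fun k => a k * b k) ∈ R := ((⟨a, ha'⟩ : R) * ⟨b, hb'⟩).2
    constructor
    · rw [pi_mk _ hs, pi_mk a ha', pi_mk b hb', ← map_add]
      exact congrArg (Ideal.Quotient.mk I) (Subtype.ext rfl)
    · rw [pi_mk _ hm, pi_mk a ha', pi_mk b hb', ← map_mul]
      exact congrArg (Ideal.Quotient.mk I) (Subtype.ext rfl)
  · -- zero
    have h0 : (fun _ => (0:K)) ∈ R := (0 : R).2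
    rw [pi_mk _ h0, show (⟨fun _ => (0:K), h0⟩ : R) = 0 from Subtype.ext rfl, map_zero]
  · -- one
    have h1 : (fun _ => (1:K)) ∈ R := (1 : R).2
    rw [pi_mk _ h1, show (⟨fun _ => (1:K), h1⟩ : R) = 1 from Subtype.ext rfl, map_one]
  · -- tendsto to v
    intro a ha
    have ha' : a ∈ R := ha
    rw [pi_mk a ha']
    exact tendsto_v9 abv lam hlam1 ω hω hlam ⟨a, ha'⟩
  · -- nonneg
    intro x
    obtain ⟨r, hr⟩ := Ideal.Quotient.mk_surjective x
    rw [← hr]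
    exact ge_of_tendsto' (tendsto_v9 abv lam hlam1 ω hω hlam r) (phi9_nonneg abv lam _)
  · -- eq zero iff
    intro x
    obtain ⟨r, hr⟩ := Ideal.Quotient.mk_surjective x
    rw [← hr]
    constructor
    · intro h
      have ht := tendsto_v9 abv lam hlam1 ω hω hlam r
      rw [h] at ht
      exact Ideal.Quotient.eq_zero_iff_mem.mpr ht
    · intro h
      have hm : r ∈ I := Ideal.Quotient.eq_zero_iff_mem.mp h
      have ht : Tendsto (phi9 abv lam (r : ℕ → K)) (ω : Filter ℕ) (nhds 0) := hm
      exact tendsto_nhds_unique (tendsto_v9 abv lam hlam1 ω hω hlam r) ht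
  · -- multiplicative
    intro x y
    obtain ⟨r, hr⟩ := Ideal.Quotient.mk_surjective x
    obtain ⟨s, hs⟩ := Ideal.Quotient.mk_surjective y
    rw [← hr, ← hs, ← map_mul]
    have h1 := tendsto_v9 abv lam hlam1 ω hω hlam (r * s)
    have h2 := (tendsto_v9 abv lam hlam1 ω hω hlam r).mul
      (tendsto_v9 abv lam hlam1 ω hω hlam s)
    have heq : phi9 abv lam ((r * s : R) : ℕ → K)
        = fun k => phi9 abv lam (r : ℕ → K) k * phi9 abv lam (s : ℕ → K) k :=
      funext fun k => phi9_mul abv lam _ _ k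
    rw [heq] at h1
    exact tendsto_nhds_unique h1 h2
  · -- ultrametric
    intro x y
    obtain ⟨r, hr⟩ := Ideal.Quotient.mk_surjective x
    obtain ⟨s, hs⟩ := Ideal.Quotient.mk_surjective y
    rw [← hr, ← hs, ← map_add]
    have h1 := tendsto_v9 abv lam hlam1 ω hω hlam (r + s)
    have hrhs := (two_rpow_tendsto9 lam hlam1 ω hω hlam).mul
      ((tendsto_v9 abv lam hlam1 ω hω hlam r).max (tendsto_v9 abv lam hlam1 ω hω hlam s))
    rw [one_mul] at hrhs
    refine le_of_tendsto_of_tendsto' h1 hrhs fun k => ?_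
    exact phi9_add_le abv lam hlam1 _ _ k
  · -- trivial on constants
    intro c hc
    have habv : 0 < abv c := abv.pos hc
    have hmem : (fun _ => c) ∈ R := by
      refine ⟨max (abv c) 1, fun k => ?_⟩
      show abv c ^ (1 / lam k) ≤ max (abv c) 1
      rcases le_total (abv c) 1 with h | h
      · exact le_max_of_le_right
          (Real.rpow_le_one (abv.nonneg c) h (le_of_lt (exp_pos9 lam hlam1 k)))
      · refine le_max_of_le_left ?_
        calc abv c ^ (1 / lam k) ≤ abv c ^ (1:ℝ) :=
              Real.rpow_le_rpow_of_exponent_le h (exp_le_one9 lam hlam1 k)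
          _ = abv c := Real.rpow_one _
    rw [pi_mk _ hmem]
    have ht : Tendsto (phi9 abv lam ((⟨fun _ => c, hmem⟩ : R) : ℕ → K)) (ω : Filter ℕ)
        (nhds 1) := by
      have : phi9 abv lam (fun _ => c) = fun k => abv c ^ (1 / lam k) := rfl
      show Tendsto (phi9 abv lam (fun _ => c)) (ω : Filter ℕ) (nhds 1)
      rw [this]
      exact rpow_tendsto_one9 habv (inv_lam_tendsto9 lam ω hω hlam)
    exact tendsto_nhds_unique (tendsto_v9 abv lam hlam1 ω hω hlam ⟨fun _ => c, hmem⟩) ht
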